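/- Let A be a real d × m matrix with columns a_1, …, a_m, and let α, p ∈ ℝ^m_{>0}. Then the image of the monomial map f_{A,α} : ℝ^d_{>0} → ℝ^m_{>0}, Θ ↦ (α_1 Θ^{a_1}, …, α_m Θ^{a_m}) (where Θ^{a_j} = Θ_1^{(a_j)_1} ⋯ Θ_d^{(a_j)_d}), intersects the polyhedron {q ∈ ℝ^m_{≥0} : A q = A p} in exactly one point. -/

import Mathlib

open Finset

private theorem phi_term_lb (a p t : ℝ) (ha : 0 < a) (hp : 0 < p) :
    p * |t| - 4 * p^2 / a ≤ a * Real.exp t - p * t := by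
  have hM : (4 * p ^ 2 / a) * a = 4 * p ^ 2 := by field_simp
  rcases le_or_gt t 0 with h | h
  · rw [abs_of_nonpos h]
    have := Real.exp_pos t
    have hd : 0 < 4 * p ^ 2 / a := by positivity
    nlinarith
  · rw [abs_of_pos h]
    have hE : (1 + t/2)^2 ≤ Real.exp t := by
      have h1 := Real.add_one_le_exp (t/2)
      have h2 : Real.exp t = Real.exp (t/2) * Real.exp (t/2) := by
        rw [← Real.exp_add]; ring_nf
      nlinarith [Real.exp_pos (t/2)]
    have hE' : a * (1 + t/2)^2 ≤ a * Real.exp t :=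
      mul_le_mul_of_nonneg_left hE ha.le
    nlinarith [sq_nonneg (a * t / 2 - 2 * p), mul_pos ha ha, ha]

private theorem birch_unique_core {m : ℕ} (α : Fin m → ℝ) (hα : ∀ i, 0 < α i)
    (y₁ y₂ : Fin m → ℝ)
    (h : ∑ i, (α i * Real.exp (y₁ i) - α i * Real.exp (y₂ i)) * (y₁ i - y₂ i) = 0) :
    y₁ = y₂ := by
  have hnn : ∀ i ∈ Finset.univ,
      0 ≤ (α i * Real.exp (y₁ i) - α i * Real.exp (y₂ i)) * (y₁ i - y₂ i) := by
    intro i _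
    rcases le_total (y₁ i) (y₂ i) with h' | h'
    · have h1 := Real.exp_le_exp.2 h'
      have h2 := hα i
      nlinarith [mul_nonneg (sub_nonneg.2 h1) (sub_nonneg.2 h')]
    · have h1 := Real.exp_le_exp.2 h'
      have h2 := hα i
      nlinarith [mul_nonneg (sub_nonneg.2 h1) (sub_nonneg.2 h')]
  have hz := (Finset.sum_eq_zero_iff_of_nonneg hnn).1 h
  funext i
  by_contra hne
  have hi := hz i (Finset.mem_univ i)
  rcases mul_eq_zero.1 hi with h0 | h0
  · have h1 : α i * Real.exp (y₁ i) = α i * Real.exp (y₂ i) := by linarith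
    have h2 : Real.exp (y₁ i) = Real.exp (y₂ i) :=
      mul_left_cancel₀ (hα i).ne' h1
    exact hne (Real.exp_injective h2)
  · exact hne (by linarith [sub_eq_zero.1 h0])

private theorem prod_rpow_eq_exp {d m : ℕ} (A : Matrix (Fin d) (Fin m) ℝ)
    (Θ : Fin d → ℝ) (hΘ : ∀ j, 0 < Θ j) (i : Fin m) :
    ∏ j, Θ j ^ (A j i) = Real.exp (∑ j, Real.log (Θ j) * A j i) := by
  rw [Real.exp_sum]
  exact Finset.prod_congr rfl fun j _ => Real.rpow_def_of_pos (hΘ j) _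

/-- Birch's theorem, algebraic-statistics form: the image of the
monomial map `Θ ↦ (α_i ∏_j Θ_j ^ A j i)_i` over positive `Θ` meets the polyhedron
`{q ≥ 0 : A q = A p}` in exactly one point. -/
theorem birch_theorem_monomial_map {d m : ℕ} (A : Matrix (Fin d) (Fin m) ℝ)
    (α p : Fin m → ℝ) (hα : ∀ i, 0 < α i) (hp : ∀ i, 0 < p i) :
    ∃! q : Fin m → ℝ,
      (∀ i, 0 ≤ q i) ∧ A.mulVec q = A.mulVec p ∧
      ∃ Θ : Fin d → ℝ, (∀ j, 0 < Θ j) ∧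
        q = fun i => α i * ∏ j, Θ j ^ (A j i) := by
  classical
  set Φ : (Fin m → ℝ) → ℝ := fun y => ∑ i, (α i * Real.exp (y i) - p i * y i) with hΦ
  have hΦcont : Continuous Φ := by
    apply continuous_finset_sum
    intro i _
    exact (continuous_const.mul (Real.continuous_exp.comp (continuous_apply i))).sub
      (continuous_const.mul (continuous_apply i))
  set V : Submodule ℝ (Fin m → ℝ) := LinearMap.range (Matrix.vecMulLinear A) with hV
  set M : ℝ := ∑ j, 4 * (p j)^2 / α j with hM
  have hM0 : 0 ≤ M := Finset.sum_nonneg fun j _ => div_nonneg (by positivity) (hα j).le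
  have hlb : ∀ (y : Fin m → ℝ) (i : Fin m), p i * |y i| - M ≤ Φ y := by
    intro y i
    have h1 : ∑ j, (p j * |y j| - 4 * (p j)^2 / α j) ≤ Φ y :=
      Finset.sum_le_sum fun j _ => phi_term_lb (α j) (p j) (y j) (hα j) (hp j)
    have h2 : p i * |y i| ≤ ∑ j, p j * |y j| :=
      Finset.single_le_sum (f := fun j => p j * |y j|)
        (fun j _ => mul_nonneg (hp j).le (abs_nonneg _)) (Finset.mem_univ i)
    rw [Finset.sum_sub_distrib] at h1
    rw [← hM] at h1
    linarith
  set S : Set (Fin m → ℝ) := (V : Set (Fin m → ℝ)) ∩ Φ ⁻¹' Set.Iic (Φ 0) with hS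
  have hSclosed : IsClosed S :=
    V.closed_of_finiteDimensional.inter (isClosed_Iic.preimage hΦcont)
  have hΦ0 : 0 ≤ Φ 0 := by
    apply Finset.sum_nonneg
    intro i _
    simp only [Pi.zero_apply, Real.exp_zero, mul_one, mul_zero, sub_zero]
    exact (hα i).le
  set R : ℝ := ∑ i, (Φ 0 + M) / p i with hR
  have hRnn : 0 ≤ R := Finset.sum_nonneg fun i _ => div_nonneg (by linarith) (hp i).le
  have hSbdd : Bornology.IsBounded S := by
    rw [isBounded_iff_forall_norm_le]
    refine ⟨R, fun y hy => ?_⟩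
    rw [pi_norm_le_iff_of_nonneg hRnn]
    intro i
    rw [Real.norm_eq_abs]
    have h1 := hlb y i
    have h2 : Φ y ≤ Φ 0 := hy.2
    have h3 : |y i| ≤ (Φ 0 + M) / p i := by
      rw [le_div_iff₀ (hp i)]
      linarith [h1, h2, (mul_comm (|y i|) (p i) : |y i| * p i = p i * |y i|)]
    exact h3.trans (Finset.single_le_sum (f := fun i => (Φ 0 + M) / p i)
      (fun j _ => div_nonneg (by linarith) (hp j).le) (Finset.mem_univ i))
  have hScpt := Metric.isCompact_of_isClosed_isBounded hSclosed hSbdd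
  have hSne : S.Nonempty := ⟨0, V.zero_mem, by simp [Set.mem_preimage]⟩
  obtain ⟨y₀, hy₀S, hy₀min⟩ := hScpt.exists_isMinOn hSne hΦcont.continuousOn
  have hy₀V : y₀ ∈ V := hy₀S.1
  have hminV : ∀ y ∈ V, Φ y₀ ≤ Φ y := by
    intro y hyV
    rcases le_or_gt (Φ y) (Φ 0) with h | h
    · exact hy₀min ⟨hyV, h⟩
    · have h0 : Φ y₀ ≤ Φ 0 := hy₀min ⟨V.zero_mem, by simp [Set.mem_preimage]⟩
      linarith
  have hcrit : ∀ v ∈ V, ∑ i, (α i * Real.exp (y₀ i) - p i) * v i = 0 := by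
    intro v hvV
    have hg : HasDerivAt (fun t : ℝ => Φ (y₀ + t • v))
        (∑ i, (α i * Real.exp (y₀ i) - p i) * v i) 0 := by
      have heq : (fun t : ℝ => Φ (y₀ + t • v)) =
          fun t : ℝ => ∑ i, (α i * Real.exp (y₀ i + t * v i) - p i * (y₀ i + t * v i)) := by
        funext t; simp [hΦ]
      rw [heq]
      have hsum : HasDerivAt
          (fun t : ℝ => ∑ i, (α i * Real.exp (y₀ i + t * v i) - p i * (y₀ i + t * v i)))
          (∑ i, (α i * Real.exp (y₀ i + 0 * v i) * v i - p i * v i)) 0 := by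
        apply HasDerivAt.fun_sum
        intro i _
        have hlin : HasDerivAt (fun t : ℝ => y₀ i + t * v i) (v i) 0 := by
          simpa using ((hasDerivAt_id (0:ℝ)).mul_const (v i)).const_add (y₀ i)
        have := ((hlin.exp).const_mul (α i)).fun_sub (hlin.const_mul (p i))
        convert this using 1; ring
      convert hsum using 2 with i
      ring_nf
    have hloc : IsLocalMin (fun t : ℝ => Φ (y₀ + t • v)) 0 :=
      Filter.Eventually.of_forall fun t => by
        have := hminV (y₀ + t • v) (V.add_mem hy₀V (V.smul_mem t hvV))
        simpa using this
    exact hloc.hasDerivAt_eq_zero hg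
  set q₀ : Fin m → ℝ := fun i => α i * Real.exp (y₀ i) with hq₀
  have hq₀i : ∀ i, q₀ i = α i * Real.exp (y₀ i) := fun i => rfl
  have hq₀A : A.mulVec q₀ = A.mulVec p := by
    funext k
    have hvmem : A k ∈ V :=
      ⟨Pi.single k 1, by rw [Matrix.vecMulLinear_apply, Matrix.single_one_vecMul]; rfl⟩
    have h0 := hcrit _ hvmem
    have h0' : ∑ i, (q₀ i * A k i - p i * A k i) = 0 := by
      refine Eq.trans (Finset.sum_congr rfl fun i _ => ?_) h0
      rw [hq₀i i]; ring
    rw [Finset.sum_sub_distrib] at h0'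
    simp only [Matrix.mulVec, dotProduct]
    have e1 : ∑ i, A k i * q₀ i = ∑ i, q₀ i * A k i :=
      Finset.sum_congr rfl fun i _ => mul_comm _ _
    have e2 : ∑ i, A k i * p i = ∑ i, p i * A k i :=
      Finset.sum_congr rfl fun i _ => mul_comm _ _
    rw [e1, e2]; linarith
  obtain ⟨x, hx⟩ := hy₀V
  have hy₀x : ∀ i, y₀ i = ∑ j, x j * A j i := by
    intro i
    rw [← hx]
    simp [Matrix.vecMulLinear_apply, Matrix.vecMul, dotProduct]
  refine ⟨q₀, ⟨fun i => mul_nonneg (hα i).le (Real.exp_pos _).le, hq₀A, fun j => Real.exp (x j),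
    fun j => Real.exp_pos _, ?_⟩, ?_⟩
  · funext i
    rw [prod_rpow_eq_exp A _ (fun j => Real.exp_pos _) i]
    simp only [Real.log_exp]
    show α i * Real.exp (y₀ i) = α i * Real.exp (∑ j, x j * A j i)
    rw [hy₀x i]
  · rintro q ⟨hq0, hqA, Θ, hΘpos, hqdef⟩
    set y : Fin m → ℝ := fun i => ∑ j, Real.log (Θ j) * A j i with hy
    have hqy : ∀ i, q i = α i * Real.exp (y i) := by
      intro i
      rw [hqdef]
      simp only
      rw [prod_rpow_eq_exp A Θ hΘpos i]
    have hAdiff : ∀ j, ∑ i, A j i * (q i - q₀ i) = 0 := by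
      intro j
      have h1 := congrFun hqA j
      have h2 := congrFun hq₀A j
      simp only [Matrix.mulVec, dotProduct] at h1 h2
      have : ∑ i, A j i * (q i - q₀ i) = ∑ i, A j i * q i - ∑ i, A j i * q₀ i := by
        rw [← Finset.sum_sub_distrib]
        exact Finset.sum_congr rfl fun i _ => by ring
      rw [this, h1, h2, sub_self]
    have hydiff : ∀ i, y i - y₀ i = ∑ j, (Real.log (Θ j) - x j) * A j i := by
      intro i
      rw [hy, hy₀x i, ← Finset.sum_sub_distrib]
      exact Finset.sum_congr rfl fun j _ => by ring
    have hkey : ∑ i, (α i * Real.exp (y i) - α i * Real.exp (y₀ i)) * (y i - y₀ i) = 0 := by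
      have e0 : ∀ i, (α i * Real.exp (y i) - α i * Real.exp (y₀ i)) * (y i - y₀ i)
          = ∑ j, (Real.log (Θ j) - x j) * (A j i * (q i - q₀ i)) := by
        intro i
        rw [hydiff i, Finset.mul_sum]
        refine Finset.sum_congr rfl fun j _ => ?_
        rw [hqy i, hq₀i i]; ring
      rw [Finset.sum_congr rfl fun i _ => e0 i, Finset.sum_comm]
      refine Finset.sum_eq_zero fun j _ => ?_
      rw [← Finset.mul_sum, hAdiff j, mul_zero]
    have hyeq : y = y₀ := birch_unique_core α hα y y₀ hkey
    funext i
    rw [hqy i, hyeq]
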